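/- (Inequality (neri.14)) Let ν ∈ ℝ with 0 < ν ≤ 1/120, let s > 0 and e₁ ∈ ℝ. Define the set E := { x + iy − u·e^{−iν} : x ∈ [e₁ − s/4, e₁ + s/4], y ∈ [−(sin ν / 2)·s, (sin ν / 2)·s], u ∈ [0,∞) } ⊆ ℂ. Then for every z ∈ E with z ≠ e₁ and every r ∈ [s, ∞): r ≤ (1 + 1/sin ν) · | z − e₁ − r·e^{−iν} |. -/

import Mathlib

noncomputable section

/-- The region `E = [e₁−s/4, e₁+s/4] + i[−(sin ν/2)s, (sin ν/2)s] − e^{−iν}[0,∞)`. -/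
def regionE (ν s e1 : ℝ) : Set ℂ :=
  {w : ℂ | ∃ x ∈ Set.Icc (e1 - s/4) (e1 + s/4),
    ∃ y ∈ Set.Icc (-(Real.sin ν / 2 * s)) (Real.sin ν / 2 * s),
    ∃ u ∈ Set.Ici (0:ℝ),
      w = (x : ℂ) + (y : ℂ) * Complex.I - (u : ℂ) * Complex.exp (-Complex.I * ν)}

/-- Inequality (neri.14). -/
theorem neri14
    (ν : ℝ) (hν0 : 0 < ν) (hν : ν ≤ 1/120)
    (s : ℝ) (hs : 0 < s) (e1 : ℝ)
    (z : ℂ) (hz : z ∈ regionE ν s e1) (hz1 : z ≠ (e1 : ℂ))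
    (r : ℝ) (hr : s ≤ r) :
    r ≤ (1 + 1 / Real.sin ν) *
          ‖z - (e1 : ℂ) - (r : ℂ) * Complex.exp (-Complex.I * ν)‖ := by
  obtain ⟨x, hx, y, hy, u, hu, hzeq⟩ := hz
  simp only [Set.mem_Icc, Set.mem_Ici] at hx hy hu
  have hsn : 0 < Real.sin ν :=
    Real.sin_pos_of_pos_of_lt_pi hν0 (by linarith [Real.pi_gt_three])
  have hc : (3/4 : ℝ) ≤ Real.cos ν := by
    nlinarith [Real.one_sub_sq_div_two_le_cos (x := ν)]
  have hexp : Complex.exp (-Complex.I * ν)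
      = (Real.cos ν : ℂ) - (Real.sin ν : ℂ) * Complex.I := by
    have : (-Complex.I * ν) = ((-ν : ℝ) : ℂ) * Complex.I := by push_cast; ring
    rw [this, Complex.exp_mul_I]
    push_cast
    rw [Complex.cos_neg, Complex.sin_neg]
    ring
  set w := z - (e1 : ℂ) - (r : ℂ) * Complex.exp (-Complex.I * ν) with hw
  have hre : w.re = (x - e1) - (u + r) * Real.cos ν := by
    rw [hw, hzeq, hexp]; simp [Complex.cos_ofReal_re, Complex.sin_ofReal_re]; ring
  have him : w.im = y + (u + r) * Real.sin ν := by
    rw [hw, hzeq, hexp]; simp [Complex.cos_ofReal_re, Complex.sin_ofReal_re]; ring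
  have h1 : -w.re ≤ ‖w‖ :=
    (neg_le_abs _).trans (Complex.abs_re_le_norm w)
  have h2 : w.im ≤ ‖w‖ :=
    (le_abs_self _).trans (Complex.abs_im_le_norm w)
  rw [hre] at h1
  rw [him] at h2
  have h3 : u + r - s/2 ≤ ‖w‖ / Real.sin ν := by
    rw [le_div_iff₀ hsn]
    nlinarith [hy.1]
  have h4 : (1 + 1 / Real.sin ν) * ‖w‖
      = ‖w‖ + ‖w‖ / Real.sin ν := by
    field_simp
  rw [h4]
  nlinarith [hx.1, hx.2]

end
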